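/- Let a > b be positive integers. Then the step count of the regular Euclidean algorithm on (a,b) (sum of all quotients plus number of divisions minus one) is less than or equal to the step count of any generalized Euclidean algorithm applied to (a,b). -/
import Mathlib


/-- A generalized Euclidean algorithm on the pair `(a, b)`:
a sequence of equations `x (i-1) = x i * p i + ε (i+1) * x (i+1)` for `i = 1, …, m`,
with positive quotients `p i`, signs `ε i = ±1`, strictly decreasing positive
remainders, and final remainder `x (m+1) = 0`. -/
structure GenEuclid (a b : ℕ) where
  m : ℕ
  x : ℕ → ℕ
  p : ℕ → ℕ
  ε : ℕ → ℤ
  hm : 1 ≤ m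
  hx0 : x 0 = a
  hx1 : x 1 = b
  hxm1 : x (m + 1) = 0
  hpos : ∀ i, i ≤ m → 0 < x i
  hdec : ∀ i, 1 ≤ i → i ≤ m → x (i + 1) < x i
  hp : ∀ i, 1 ≤ i → i ≤ m → 1 ≤ p i
  hε : ∀ i, 2 ≤ i → i ≤ m → ε i = 1 ∨ ε i = -1
  heq : ∀ i, 1 ≤ i → i ≤ m → (x (i - 1) : ℤ) = x i * p i + ε (i + 1) * x (i + 1)

/-- The step count of a generalized Euclidean algorithm:
the sum of all quotients (total subtractions) plus the number of divisions minus one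
(the swaps). -/
def GenEuclid.steps {a b : ℕ} (E : GenEuclid a b) : ℕ :=
  (E.m - 1) + ∑ i ∈ Finset.Icc 1 E.m, E.p i

/-- The regular Euclidean algorithm: all remainders are taken with sign `+1`. -/
def GenEuclid.IsRegular {a b : ℕ} (E : GenEuclid a b) : Prop :=
  ∀ i, 2 ≤ i → i ≤ E.m → E.ε i = 1

/-- The method of least absolute remainders: at each division the remainder of least
absolute value is chosen, i.e. `2 * x (i+1) ≤ x i`, with ties (remainder exactly half
the divisor) broken in favor of the positive remainder. -/
def GenEuclid.IsLAR {a b : ℕ} (E : GenEuclid a b) : Prop :=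
  ∀ i, 1 ≤ i → i ≤ E.m →
    2 * E.x (i + 1) ≤ E.x i ∧ (2 * E.x (i + 1) = E.x i → E.ε (i + 1) = 1)

/-- The method of least absolute remainders (no tie-breaking condition):
at every step `2 * x (i+1) ≤ x i`. -/
def GenEuclid.IsLAR' {a b : ℕ} (E : GenEuclid a b) : Prop :=
  ∀ i, 1 ≤ i → i ≤ E.m → 2 * E.x (i + 1) ≤ E.x i
def F : ℕ → ℕ → ℕ
  | a, b =>
    if h : b = 0 then 0
    else a / b + (if a % b = 0 then 0 else 1 + F b (a % b))
termination_by a b => b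
decreasing_by exact Nat.mod_lt _ (Nat.pos_of_ne_zero h)

lemma F_eq (a b : ℕ) (hb : 0 < b) :
    F a b = a / b + (if a % b = 0 then 0 else 1 + F b (a % b)) := by
  rw [F, dif_neg hb.ne']

lemma quot_spec (b p r : ℕ) (hb : 0 < b) (hr : r < b) :
    (b * p + r) / b = p ∧ (b * p + r) % b = r := by
  refine ⟨?_, ?_⟩
  · rw [Nat.mul_add_div hb, Nat.div_eq_of_lt hr]; omega
  · rw [Nat.mul_add_mod, Nat.mod_eq_of_lt hr]

-- key lemma C
lemma lemC (b c : ℕ) (hc : 0 < c) (hcb : c < b) : F b c ≤ 1 + F b (b - c) := by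
  set d := b - c with hd
  have hd0 : 0 < d := by omega
  rcases lt_trichotomy (2 * c) b with h | h | h
  · -- c < d
    have hcd : c < d := by omega
    have hbd : b = d + c := by omega
    have h1 : F b c = F d c + 1 := by
      rw [F_eq b c hc, F_eq d c hc]
      have hm : b % c = d % c := by rw [hbd, Nat.add_mod_right]  -- (d+c)%c
      have hv : b / c = d / c + 1 := by rw [hbd, Nat.add_div_right _ hc]
      rw [hm, hv]; omega
    have h2 : F b d = 2 + F d c := by
      rw [F_eq b d hd0]
      have hm : b % d = c := by
        rw [Nat.mod_eq_sub_mod (by omega : d ≤ b), show b - d = c by omega,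
          Nat.mod_eq_of_lt hcd]
      have hv : b / d = 1 := by
        rw [hbd, add_comm d c, Nat.add_div_right _ hd0, Nat.div_eq_of_lt hcd]
      rw [hm, hv, if_neg hc.ne']; omega
    omega
  · have : c = d := by omega
    rw [this]; omega
  · -- d < c
    have hdc : d < c := by omega
    have hbd : b = c + d := by omega
    have h1 : F b c = 2 + F c d := by
      rw [F_eq b c hc]
      have hm : b % c = d := by
        rw [Nat.mod_eq_sub_mod (by omega : c ≤ b), show b - c = d from rfl,
          Nat.mod_eq_of_lt hdc]
      have hv : b / c = 1 := by
        rw [hbd, add_comm c d, Nat.add_div_right _ hc, Nat.div_eq_of_lt hdc]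
      rw [hm, hv, if_neg hd0.ne']; omega
    have h2 : F b d = F c d + 1 := by
      rw [F_eq b d hd0, F_eq c d hd0]
      have hm : b % d = c % d := by rw [hbd, Nat.add_mod_right]
      have hv : b / d = c / d + 1 := by rw [hbd, Nat.add_div_right _ hd0]
      rw [hm, hv]; omega
    omega

def GenEuclid.tail {a b : ℕ} (E : GenEuclid a b) (h2 : 2 ≤ E.m) :
    GenEuclid b (E.x 2) where
  m := E.m - 1
  x i := E.x (i + 1)
  p i := E.p (i + 1)
  ε i := E.ε (i + 1)
  hm := by omega
  hx0 := E.hx1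
  hx1 := rfl
  hxm1 := by show E.x (E.m - 1 + 1 + 1) = 0; rw [show E.m - 1 + 1 + 1 = E.m + 1 by omega]; exact E.hxm1
  hpos i hi := E.hpos (i + 1) (by omega)
  hdec i h1 hi := E.hdec (i + 1) (by omega) (by omega)
  hp i h1 hi := E.hp (i + 1) (by omega) (by omega)
  hε i h1 hi := E.hε (i + 1) (by omega) (by omega)
  heq i h1 hi := by
    have := E.heq (i + 1) (by omega) (by omega)
    rwa [show i + 1 - 1 = i - 1 + 1 by omega] at this

lemma steps_tail {a b : ℕ} (E : GenEuclid a b) (h2 : 2 ≤ E.m) :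
    E.steps = E.p 1 + 1 + (E.tail h2).steps := by
  have hins : Finset.Icc 1 E.m = insert 1 (Finset.Icc 2 E.m) := by
    ext i; simp; omega
  have hsum : ∑ i ∈ Finset.Icc 1 (E.m - 1), E.p (i + 1)
      = ∑ i ∈ Finset.Icc 2 E.m, E.p i := by
    rw [← Finset.Ico_add_one_right_eq_Icc, ← Finset.Ico_add_one_right_eq_Icc, Finset.sum_Ico_eq_sum_range,
      Finset.sum_Ico_eq_sum_range, show E.m - 1 + 1 - 1 = E.m + 1 - 2 by omega]
    exact Finset.sum_congr rfl fun i _ => by rw [show 1 + i + 1 = 2 + i by omega]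
  unfold GenEuclid.steps
  rw [hins, Finset.sum_insert (by simp)]
  show E.m - 1 + (E.p 1 + ∑ i ∈ Finset.Icc 2 E.m, E.p i)
      = E.p 1 + 1 + (E.m - 1 - 1 + ∑ i ∈ Finset.Icc 1 (E.m-1), E.p (i+1))
  rw [hsum]; omega

lemma lemB : ∀ b : ℕ, 0 < b → ∀ a : ℕ, b < a → ∀ E : GenEuclid a b, F a b ≤ E.steps := by
  intro b
  induction b using Nat.strong_induction_on with
  | _ b ih =>
  intro hb a hba E
  have h1m := E.hm
  have hp1 := E.hp 1 le_rfl h1m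
  have heq1 := E.heq 1 le_rfl h1m
  rw [show (1:ℕ) - 1 = 0 from rfl, E.hx0, E.hx1] at heq1
  simp only [Nat.reduceAdd] at heq1
  rcases eq_or_lt_of_le h1m with hm1 | hm2
  · -- E.m = 1
    have hx2 : E.x 2 = 0 := by rw [show 2 = E.m + 1 by omega]; exact E.hxm1
    rw [hx2] at heq1
    have key : a = b * E.p 1 := by
      have : (a:ℤ) = (b:ℤ) * E.p 1 := by push_cast at heq1; linarith
      exact_mod_cast this
    obtain ⟨hdiv, hmod⟩ := quot_spec b (E.p 1) 0 hb hb
    rw [Nat.add_zero] at hdiv hmod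
    unfold GenEuclid.steps
    rw [← hm1, Finset.Icc_self, Finset.sum_singleton, F_eq a b hb]
    simp only [key, hdiv, hmod, if_pos]; omega
  · -- 2 ≤ E.m
    have hx2pos : 0 < E.x 2 := E.hpos 2 hm2
    have hx2b : E.x 2 < b := by have := E.hdec 1 le_rfl h1m; rwa [E.hx1] at this
    have hstep := steps_tail E hm2
    have hIH : F b (E.x 2) ≤ (E.tail hm2).steps := ih (E.x 2) hx2b hx2pos b hx2b _
    rcases E.hε 2 le_rfl hm2 with hε | hε <;> rw [hε] at heq1
    · have key : a = b * E.p 1 + E.x 2 := by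
        have : (a:ℤ) = (b : ℤ) * E.p 1 + E.x 2 := by linarith
        exact_mod_cast this
      obtain ⟨hdiv, hmod⟩ := quot_spec b (E.p 1) (E.x 2) hb hx2b
      rw [F_eq a b hb]
      simp only [key, hdiv, hmod, if_neg hx2pos.ne']
      rw [hstep]; omega
    · have key : b * E.p 1 = a + E.x 2 := by
        have : (b:ℤ) * E.p 1 = a + E.x 2 := by linarith
        exact_mod_cast this
      obtain ⟨q, hq⟩ : ∃ q, E.p 1 = q + 1 := ⟨E.p 1 - 1, by omega⟩
      rw [hq, Nat.mul_add, Nat.mul_one] at key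
      have hq1 : 1 ≤ q := by rcases Nat.eq_zero_or_pos q with h0 | h
                             · rw [h0] at key; omega
                             · exact h
      set c := b - E.x 2 with hc
      have ha : a = b * q + c := by omega
      obtain ⟨hdiv, hmod⟩ := quot_spec b q c hb (by omega)
      rw [F_eq a b hb]
      simp only [ha, hdiv, hmod]
      rw [if_neg (show ¬ (c = 0) by omega)]
      have hC := lemC b c (by omega) (by omega)
      rw [show b - c = E.x 2 by omega] at hC
      rw [hstep]; omega

lemma lemA : ∀ b : ℕ, 0 < b → ∀ a : ℕ, b < a →
    ∀ R : GenEuclid a b, R.IsRegular → R.steps = F a b := by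
  intro b
  induction b using Nat.strong_induction_on with
  | _ b ih =>
  intro hb a hba R hR
  have h1m := R.hm
  have heq1 := R.heq 1 le_rfl h1m
  rw [show (1:ℕ) - 1 = 0 from rfl, R.hx0, R.hx1] at heq1
  simp only [Nat.reduceAdd] at heq1
  rcases eq_or_lt_of_le h1m with hm1 | hm2
  · have hx2 : R.x 2 = 0 := by rw [show 2 = R.m + 1 by omega]; exact R.hxm1
    rw [hx2] at heq1
    have key : a = b * R.p 1 := by
      have : (a:ℤ) = (b:ℤ) * R.p 1 := by push_cast at heq1; linarith
      exact_mod_cast this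
    obtain ⟨hdiv, hmod⟩ := quot_spec b (R.p 1) 0 hb hb
    rw [Nat.add_zero] at hdiv hmod
    unfold GenEuclid.steps
    rw [← hm1, Finset.Icc_self, Finset.sum_singleton, F_eq a b hb]
    simp only [key, hdiv, hmod, if_pos]; omega
  · have hx2pos : 0 < R.x 2 := R.hpos 2 hm2
    have hx2b : R.x 2 < b := by have := R.hdec 1 le_rfl h1m; rwa [R.hx1] at this
    have hstep := steps_tail R hm2
    have htailreg : (R.tail hm2).IsRegular := by
      intro i h2i him
      have hm' : (R.tail hm2).m = R.m - 1 := rfl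
      exact hR (i + 1) (by omega) (by omega)
    have hIH : (R.tail hm2).steps = F b (R.x 2) :=
      ih (R.x 2) hx2b hx2pos b hx2b _ htailreg
    rw [hR 2 le_rfl hm2] at heq1
    have key : a = b * R.p 1 + R.x 2 := by
      have : (a:ℤ) = (b : ℤ) * R.p 1 + R.x 2 := by linarith
      exact_mod_cast this
    obtain ⟨hdiv, hmod⟩ := quot_spec b (R.p 1) (R.x 2) hb hx2b
    rw [F_eq a b hb]
    simp only [key, hdiv, hmod, if_neg hx2pos.ne']
    rw [hstep, hIH]
    omega

/-- For positive integers `a > b`, the step count of the regular Euclidean algorithm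
on `(a, b)` is at most the step count of any generalized Euclidean algorithm. -/
theorem regular_steps_min (a b : ℕ) (hb : 0 < b) (hba : b < a)
    (R E : GenEuclid a b) (hR : R.IsRegular) :
    R.steps ≤ E.steps := by

  rw [lemA b hb a hba R hR]
  exact lemB b hb a hba E
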